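/- Let γ ∈ ℝ. The Jacobian matrix of the vector field G_γ at the equilibrium point P₃ = (0, 0, 1) has eigenvalues −2, −1/2 and 2 − 3γ (i.e. its characteristic polynomial is (X + 2)(X + 1/2)(X − (2 − 3γ))). In particular, for γ ∈ [0, 2], all three eigenvalues are negative if and only if γ > 2/3. -/

import Mathlib

open Polynomial

/-- The averaged Bianchi V guiding vector field `G_γ` in coordinates
`p = (Ω, Σ, K) = (p 0, p 1, p 2)`. -/
noncomputable def GBV (γ : ℝ) : (Fin 3 → ℝ) → (Fin 3 → ℝ) := fun p =>
  ![-(1 / 2) * p 0 *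
      (3 * γ * ((p 1) ^ 2 + (p 0) ^ 2 + p 2 - 1) - 6 * (p 1) ^ 2 - 3 * (p 0) ^ 2
        - 2 * p 2 + 3),
    (1 / 2) * p 1 *
      (-(3 * γ) * ((p 1) ^ 2 + (p 0) ^ 2 + p 2 - 1) + 6 * (p 1) ^ 2 + 3 * (p 0) ^ 2
        + 2 * p 2 - 6),
    -(p 2) *
      (3 * γ * ((p 1) ^ 2 + (p 0) ^ 2 + p 2 - 1) - 6 * (p 1) ^ 2 - 3 * (p 0) ^ 2
        - 2 * p 2 + 2)]

/-- The Jacobian of `G_γ` at `P₃ = (0,0,1)` has eigenvalues `-2`, `-1/2` and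
`2 - 3γ` (characteristic polynomial `(X + 2)(X + 1/2)(X - (2 - 3γ))`); for
`γ ∈ [0,2]` all three eigenvalues are negative iff `γ > 2/3`. -/
theorem bianchiV_jacobian_P3 (γ : ℝ) :
    ∃ J : Matrix (Fin 3) (Fin 3) ℝ,
      HasFDerivAt (GBV γ)
        (LinearMap.toContinuousLinearMap (Matrix.toLin' J)) ![0, 0, 1] ∧
      J.charpoly = (X + C 2) * (X + C (1 / 2)) * (X - C (2 - 3 * γ)) ∧
      (0 ≤ γ ∧ γ ≤ 2 →
        (((-2 : ℝ) < 0 ∧ (-(1 / 2) : ℝ) < 0 ∧ 2 - 3 * γ < 0) ↔ 2 / 3 < γ)) := by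
  refine ⟨!![-(1/2), 0, 0; 0, -2, 0; 0, 0, 2 - 3*γ], ?_, ?_, ?_⟩
  · refine hasFDerivAt_pi'.2 ?_
    intro i
    have h0 : HasFDerivAt (fun p : Fin 3 → ℝ => p 0)
        ((ContinuousLinearMap.proj 0 : (Fin 3 → ℝ) →L[ℝ] ℝ)) ![0,0,1] := (ContinuousLinearMap.proj (R := ℝ) (φ := fun _ : Fin 3 => ℝ) 0).hasFDerivAt
    have h1 : HasFDerivAt (fun p : Fin 3 → ℝ => p 1)
        ((ContinuousLinearMap.proj 1 : (Fin 3 → ℝ) →L[ℝ] ℝ)) ![0,0,1] := (ContinuousLinearMap.proj (R := ℝ) (φ := fun _ : Fin 3 => ℝ) 1).hasFDerivAt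
    have h2 : HasFDerivAt (fun p : Fin 3 → ℝ => p 2)
        ((ContinuousLinearMap.proj 2 : (Fin 3 → ℝ) →L[ℝ] ℝ)) ![0,0,1] := (ContinuousLinearMap.proj (R := ℝ) (φ := fun _ : Fin 3 => ℝ) 2).hasFDerivAt
    fin_cases i
    · simp only [GBV, Matrix.cons_val_zero]
      have := (h0.const_mul (-(1/2) : ℝ)).mul
        (((((((h1.mul h1).add (h0.mul h0)).add h2).sub_const 1).const_mul (3*γ)).sub
          ((h1.mul h1).const_mul 6)).sub ((h0.mul h0).const_mul 3) |>.sub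
          (h2.const_mul 2) |>.add_const 3)
      convert this using 1
      · rfl
      · funext p; simp; exact Or.inl (by ring)
      · ext v
        simp [Matrix.toLin'_apply, Matrix.mulVec, dotProduct, Fin.sum_univ_three]
        ring
    · simp only [GBV, Matrix.cons_val_one, Matrix.head_cons]
      have := (h1.const_mul ((1/2) : ℝ)).mul
        (((((((h1.mul h1).add (h0.mul h0)).add h2).sub_const 1).const_mul (-(3*γ))).add
          ((h1.mul h1).const_mul 6)).add ((h0.mul h0).const_mul 3) |>.add
          (h2.const_mul 2) |>.sub_const 6)
      convert this using 1
      · rfl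
      · funext p; simp; exact Or.inl (by ring)
      · ext v
        simp [Matrix.toLin'_apply, Matrix.mulVec, dotProduct, Fin.sum_univ_three]
        ring
    · simp only [GBV, Matrix.cons_val_two, Matrix.tail_cons, Matrix.head_cons]
      have := h2.neg.mul
        (((((((h1.mul h1).add (h0.mul h0)).add h2).sub_const 1).const_mul (3*γ)).sub
          ((h1.mul h1).const_mul 6)).sub ((h0.mul h0).const_mul 3) |>.sub
          (h2.const_mul 2) |>.add_const 2)
      convert this using 1
      · rfl
      · funext p; simp; exact Or.inl (by ring)
      · ext v
        simp [Matrix.toLin'_apply, Matrix.mulVec, dotProduct, Fin.sum_univ_three]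
        ring
  · rw [Matrix.charpoly, Matrix.det_fin_three]
    simp [Matrix.charmatrix_apply]
    ring_nf
    exact Or.inl trivial
  · rintro ⟨h0, h2⟩
    constructor
    · rintro ⟨-, -, h⟩; linarith
    · intro h; refine ⟨by norm_num, by norm_num, by linarith⟩
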